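/- Suppose that additionally ψ(x_i(t), x_j(t)) ≥ ψ₀ > 0 for all i, j and all t ∈ [t_a, t_b]. Then under the Hegselmann–Krause dynamics with positive interaction (α ≡ 1) on [t_a, t_b], d(t_b) ≤ C · d(t_a), where C = max{ 1 - e^{-K(t_b - t_a)}, 1 - (ψ₀/K)(1 - e^{-K(t_b - t_a)}) } ∈ (0,1). -/

import Mathlib

open Set Filter Topology

/-- If each `g k` has derivative `G k`, and at any point where `g k` is maximal the
derivative is nonpositive, then all `g k` stay below any bound on the initial values. -/
lemma maxDecay {ι : Type*} [Fintype ι] [Nonempty ι] {a b : ℝ}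
    (g G : ι → ℝ → ℝ) (M0 : ℝ)
    (hg : ∀ k, ∀ s ∈ Set.Icc a b, HasDerivAt (g k) (G k s) s)
    (hmax : ∀ s ∈ Set.Icc a b, ∀ k, (∀ l, g l s ≤ g k s) → G k s ≤ 0)
    (hM0 : ∀ l, g l a ≤ M0) :
    ∀ t ∈ Set.Icc a b, ∀ k, g k t ≤ M0 := by
  have hne : (Finset.univ : Finset ι).Nonempty := Finset.univ_nonempty
  set F : ℝ → ℝ := fun t => Finset.univ.sup' hne (fun k => g k t) with hF
  have hFc : ContinuousOn F (Set.Icc a b) := by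
    intro s hs
    exact (ContinuousAt.finset_sup'_apply hne
      (fun k _ => (hg k s hs).continuousAt)).continuousWithinAt
  have key : ∀ t ∈ Set.Icc a b, F t ≤ M0 := by
    intro t ht
    refine image_le_of_liminf_slope_right_le_deriv_boundary (B := fun _ => M0)
      (B' := fun _ => 0) hFc ?_ continuousOn_const
      (fun s _ => hasDerivWithinAt_const s _ M0) ?_ ht
    · exact Finset.sup'_le hne _ (fun k _ => hM0 k)
    · intro s hs r hr
      have hall : ∀ᶠ z in 𝓝[>] s, ∀ k, (g k z - F s) / (z - s) < r := by
        rw [eventually_all]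
        intro k
        have hks : g k s ≤ F s := Finset.le_sup' (fun l => g l s) (Finset.mem_univ k)
        rcases eq_or_lt_of_le hks with heq | hlt
        · -- k is a maximizer at s
          have hmaxk : ∀ l, g l s ≤ g k s := by
            intro l
            exact le_of_le_of_eq (Finset.le_sup' (fun l => g l s) (Finset.mem_univ l)) heq.symm
          have hGk : G k s < r :=
            lt_of_le_of_lt (hmax s (Set.Ico_subset_Icc_self hs) k hmaxk) hr
          have hten : Tendsto (slope (g k) s) (𝓝[≠] s) (𝓝 (G k s)) :=
            hasDerivAt_iff_tendsto_slope.1 (hg k s (Set.Ico_subset_Icc_self hs))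
          have hev : ∀ᶠ z in 𝓝[≠] s, slope (g k) s z < r := hten.eventually_lt_const hGk
          have hmono : 𝓝[>] s ≤ 𝓝[≠] s :=
            nhdsWithin_mono s (fun z hz => ne_of_gt hz)
          refine (hev.filter_mono hmono).mono (fun z hz => ?_)
          rwa [slope_def_field, heq] at hz
        · -- g k s < F s : numerator eventually negative
          have hct : Tendsto (fun z => g k z - F s) (𝓝[>] s) (𝓝 (g k s - F s)) :=
            (((hg k s (Set.Ico_subset_Icc_self hs)).continuousAt.tendsto).mono_left
              nhdsWithin_le_nhds).sub_const _
          have hevneg : ∀ᶠ z in 𝓝[>] s, g k z - F s < 0 :=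
            hct.eventually_lt_const (by linarith)
          filter_upwards [hevneg, self_mem_nhdsWithin] with z hz1 hz2
          exact lt_trans (div_neg_of_neg_of_pos hz1 (by simpa [sub_pos] using hz2)) hr
      refine (hall.mono (fun z hz => ?_)).frequently
      obtain ⟨k, -, hk⟩ := Finset.exists_mem_eq_sup' hne (fun k => g k z)
      rw [slope_def_field, show F z = g k z from hk]
      exact hz k
  intro t ht k
  exact le_trans (Finset.le_sup' (fun l => g l t) (Finset.mem_univ k)) (key t ht)

/-- Exponential comparison: if `f' ≤ -Kc f + c` on `[a,b]` then `f b` obeys the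
integrated bound. -/
lemma expComp {a b c Kc : ℝ} (hab : a < b) (hK : 0 < Kc) {f F : ℝ → ℝ}
    (hf : ∀ s ∈ Set.Icc a b, HasDerivAt f (F s) s)
    (hbound : ∀ s ∈ Set.Icc a b, F s ≤ -Kc * f s + c) :
    f b ≤ Real.exp (-Kc * (b - a)) * f a + c / Kc * (1 - Real.exp (-Kc * (b - a))) := by
  set w : ℝ → ℝ := fun t => Real.exp (Kc * t) * (f t - c / Kc) with hw
  have hwd : ∀ s ∈ Set.Icc a b,
      HasDerivAt w (Real.exp (Kc * s) * (Kc * f s + F s - c)) s := by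
    intro s hs
    have h1 : HasDerivAt (fun t => Real.exp (Kc * t)) (Real.exp (Kc * s) * Kc) s := by
      simpa using (((hasDerivAt_id s).const_mul Kc).exp)
    have h2 := (hf s hs).sub_const (c / Kc)
    have h3 := h1.mul h2
    refine h3.congr_deriv ?_
    have hc : Kc * (c / Kc) = c := by field_simp
    linear_combination (-Real.exp (Kc * s)) * hc
  have hanti : AntitoneOn w (Set.Icc a b) := by
    apply antitoneOn_of_deriv_nonpos (convex_Icc a b)
    · exact fun s hs => (hwd s hs).continuousAt.continuousWithinAt
    · intro s hs
      rw [interior_Icc] at hs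
      exact ((hwd s (Set.Ioo_subset_Icc_self hs)).differentiableAt).differentiableWithinAt
    · intro s hs
      rw [interior_Icc] at hs
      rw [(hwd s (Set.Ioo_subset_Icc_self hs)).deriv]
      have hb := hbound s (Set.Ioo_subset_Icc_self hs)
      have : Kc * f s + F s - c ≤ 0 := by linarith
      exact mul_nonpos_iff.2 (Or.inl ⟨(Real.exp_pos _).le, this⟩)
  have hwba : w b ≤ w a :=
    hanti (Set.left_mem_Icc.2 hab.le) (Set.right_mem_Icc.2 hab.le) hab.le
  set e := Real.exp (-Kc * (b - a)) with he
  have hmulrel : Real.exp (Kc * a) = e * Real.exp (Kc * b) := by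
    rw [he, ← Real.exp_add]
    ring_nf
  have hEb : (0:ℝ) < Real.exp (Kc * b) := Real.exp_pos _
  rw [hw] at hwba
  simp only [hmulrel] at hwba
  have h4 : f b - c / Kc ≤ e * (f a - c / Kc) := by nlinarith [hwba, hEb]
  calc f b ≤ e * (f a - c / Kc) + c / Kc := by linarith
    _ = e * f a + c / Kc * (1 - e) := by ring

/-- Algebraic estimate for one interaction term. -/
lemma termBound {p q a f D0 K ψ₀ : ℝ} (hψ₀ : 0 < ψ₀) (hpl : ψ₀ ≤ p) (hpu : p ≤ K)
    (hql : ψ₀ ≤ q) (hqu : q ≤ K) (hf : 0 ≤ f) (hfD : f ≤ D0)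
    (hb : a + f ≤ D0) (hna : -a ≤ D0) :
    p * a - q * (a + f) ≤ -K * f + (K - ψ₀) * D0 := by
  have hKψ : ψ₀ ≤ K := hpl.trans hpu
  rcases le_or_gt 0 a with ha | ha
  · nlinarith [mul_nonneg (sub_nonneg.2 hpu) ha, mul_nonneg (sub_nonneg.2 hql) (by linarith : (0:ℝ) ≤ a + f), mul_nonneg (sub_nonneg.2 hKψ) (by linarith : (0:ℝ) ≤ D0 - f - a)]
  · rcases le_or_gt 0 (a + f) with hb2 | hb2
    · nlinarith [mul_nonpos_iff.2 (Or.inr ⟨ha.le, sub_nonneg.2 hpl⟩), mul_nonneg (sub_nonneg.2 hql) hb2, mul_nonneg (sub_nonneg.2 hKψ) (by linarith : (0:ℝ) ≤ D0 - f)]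
    · nlinarith [mul_nonpos_iff.2 (Or.inr ⟨ha.le, sub_nonneg.2 hpl⟩), mul_nonpos_iff.2 (Or.inr ⟨hb2.le, sub_nonneg.2 hqu⟩), mul_nonneg (sub_nonneg.2 hKψ) (by linarith : (0:ℝ) ≤ D0 + a)]
theorem stmt_9 (N d : ℕ) (hN : 2 ≤ N) (hd : 1 ≤ d)
    (ta tb : ℝ) (hab : ta < tb) (K ψ₀ : ℝ) (hψ₀ : 0 < ψ₀) (hψ₀K : ψ₀ ≤ K)
    (ψ : EuclideanSpace ℝ (Fin d) → EuclideanSpace ℝ (Fin d) → ℝ)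
    (hψc : Continuous fun p : EuclideanSpace ℝ (Fin d) × EuclideanSpace ℝ (Fin d) => ψ p.1 p.2)
    (hψpos : ∀ y z, 0 < ψ y z) (hψK : ∀ y z, ψ y z ≤ K)
    (x : Fin N → ℝ → EuclideanSpace ℝ (Fin d))
    (hψlow : ∀ i j : Fin N, ∀ s ∈ Set.Icc ta tb, ψ₀ ≤ ψ (x i s) (x j s))
    (hdyn : ∀ i, ∀ s ∈ Set.Icc ta tb, HasDerivAt (x i)
      (((N : ℝ) - 1)⁻¹ • ∑ j ∈ Finset.univ.erase i, ψ (x i s) (x j s) • (x j s - x i s)) s) :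
    max (1 - Real.exp (-K * (tb - ta)))
        (1 - ψ₀ / K * (1 - Real.exp (-K * (tb - ta)))) ∈ Set.Ioo (0:ℝ) 1 ∧
      (⨆ p : Fin N × Fin N, ‖x p.1 tb - x p.2 tb‖) ≤
        max (1 - Real.exp (-K * (tb - ta)))
          (1 - ψ₀ / K * (1 - Real.exp (-K * (tb - ta)))) *
          ⨆ p : Fin N × Fin N, ‖x p.1 ta - x p.2 ta‖ := by
  haveI : NeZero N := ⟨by omega⟩
  have hK : 0 < K := lt_of_lt_of_le hψ₀ hψ₀K
  have hNpos : (0:ℝ) < (N:ℝ) - 1 := by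
    have : (2:ℝ) ≤ (N:ℝ) := by exact_mod_cast hN
    linarith
  set e0 := Real.exp (-K * (tb - ta)) with he0
  have he0pos : 0 < e0 := Real.exp_pos _
  have he01 : e0 < 1 := by
    rw [he0, Real.exp_lt_one_iff]
    nlinarith [mul_pos hK (sub_pos.2 hab)]
  set C := max (1 - e0) (1 - ψ₀ / K * (1 - e0)) with hCdef
  have hmemC : C ∈ Set.Ioo (0:ℝ) 1 := by
    constructor
    · exact lt_max_of_lt_left (by linarith)
    · refine max_lt (by linarith) ?_
      have h1 : 0 < ψ₀ / K := div_pos hψ₀ hK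
      nlinarith [mul_pos h1 (by linarith : (0:ℝ) < 1 - e0)]
  refine ⟨hmemC, ?_⟩
  have hbddta : BddAbove (Set.range fun p : Fin N × Fin N => ‖x p.1 ta - x p.2 ta‖) :=
    Set.Finite.bddAbove (Set.finite_range _)
  set D0 := ⨆ p : Fin N × Fin N, ‖x p.1 ta - x p.2 ta‖ with hD0def
  have hD0mem : ∀ p : Fin N × Fin N, ‖x p.1 ta - x p.2 ta‖ ≤ D0 := fun p => le_ciSup hbddta p
  have hD0nonneg : 0 ≤ D0 := by
    refine le_trans ?_ (hD0mem (0, 0))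
    exact norm_nonneg _
  obtain ⟨P, hP⟩ := Finite.exists_max (fun p : Fin N × Fin N => ‖x p.1 tb - x p.2 tb‖)
  set i := P.1 with hi
  set j := P.2 with hj
  have hsupb : (⨆ p : Fin N × Fin N, ‖x p.1 tb - x p.2 tb‖) ≤ ‖x i tb - x j tb‖ := by
    exact ciSup_le hP
  refine le_trans hsupb ?_
  rcases eq_or_lt_of_le (norm_nonneg (x i tb - x j tb)) with hD1 | hD1
  · rw [← hD1]
    exact mul_nonneg hmemC.1.le hD0nonneg
  set D1 := ‖x i tb - x j tb‖ with hD1def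
  set v : EuclideanSpace ℝ (Fin d) := D1⁻¹ • (x i tb - x j tb) with hv
  have hvnorm : ‖v‖ = 1 := by
    rw [hv, norm_smul, norm_inv, Real.norm_eq_abs, abs_of_pos hD1, ← hD1def,
      inv_mul_cancel₀ hD1.ne']
  set fp : Fin N × Fin N → ℝ → ℝ := fun p t => (inner ℝ (x p.1 t - x p.2 t) v : ℝ) with hfp
  set Gp : Fin N × Fin N → ℝ → ℝ := fun p s =>
    (inner ℝ ((((N : ℝ) - 1)⁻¹ • ∑ m ∈ Finset.univ.erase p.1, ψ (x p.1 s) (x m s) • (x m s - x p.1 s)) -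
     (((N : ℝ) - 1)⁻¹ • ∑ m ∈ Finset.univ.erase p.2, ψ (x p.2 s) (x m s) • (x m s - x p.2 s))) v : ℝ) with hGp
  have hfd : ∀ p : Fin N × Fin N, ∀ s ∈ Set.Icc ta tb, HasDerivAt (fp p) (Gp p s) s := by
    intro p s hs
    have h := HasDerivAt.inner ℝ ((hdyn p.1 s hs).sub (hdyn p.2 s hs)) (hasDerivAt_const s v)
    simpa [hfp, hGp] using h
  have hGpexp : ∀ (p : Fin N × Fin N) (s : ℝ), Gp p s = ((N : ℝ) - 1)⁻¹ *
      ((∑ m ∈ Finset.univ.erase p.1, ψ (x p.1 s) (x m s) * (inner ℝ (x m s - x p.1 s) v : ℝ)) -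
       (∑ m ∈ Finset.univ.erase p.2, ψ (x p.2 s) (x m s) * (inner ℝ (x m s - x p.2 s) v : ℝ))) := by
    intro p s
    simp only [hGp]
    rw [inner_sub_left, real_inner_smul_left, real_inner_smul_left, sum_inner, sum_inner]
    simp_rw [real_inner_smul_left]
    ring
  have hmaxcond : ∀ s ∈ Set.Icc ta tb, ∀ p : Fin N × Fin N,
      (∀ q : Fin N × Fin N, fp q s ≤ fp p s) → Gp p s ≤ 0 := by
    intro s _ p hp
    rw [hGpexp]
    have hA : (∑ m ∈ Finset.univ.erase p.1, ψ (x p.1 s) (x m s) * (inner ℝ (x m s - x p.1 s) v : ℝ)) ≤ 0 := by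
      apply Finset.sum_nonpos
      intro m _
      refine mul_nonpos_iff.2 (Or.inl ⟨(hψpos _ _).le, ?_⟩)
      have hiden : (inner ℝ (x m s - x p.1 s) v : ℝ) = fp (m, p.2) s - fp p s := by
        simp only [hfp, inner_sub_left]
        ring
      rw [hiden]
      linarith [hp (m, p.2)]
    have hB : (0:ℝ) ≤ ∑ m ∈ Finset.univ.erase p.2,
        ψ (x p.2 s) (x m s) * (inner ℝ (x m s - x p.2 s) v : ℝ) := by
      apply Finset.sum_nonneg
      intro m _
      refine mul_nonneg (hψpos _ _).le ?_
      have hiden : (inner ℝ (x m s - x p.2 s) v : ℝ) = fp p s - fp (p.1, m) s := by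
        simp only [hfp, inner_sub_left]
        ring
      rw [hiden]
      linarith [hp (p.1, m)]
    exact mul_nonpos_iff.2 (Or.inl ⟨inv_nonneg.2 hNpos.le, by linarith⟩)
  have hdiam : ∀ t ∈ Set.Icc ta tb, ∀ p : Fin N × Fin N, fp p t ≤ D0 := by
    refine maxDecay fp Gp D0 hfd hmaxcond ?_
    intro p
    calc fp p ta ≤ ‖x p.1 ta - x p.2 ta‖ * ‖v‖ := real_inner_le_norm _ _
      _ = ‖x p.1 ta - x p.2 ta‖ := by rw [hvnorm, mul_one]
      _ ≤ D0 := hD0mem p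
  have hbound : ∀ s ∈ Set.Icc ta tb, 0 ≤ fp (i, j) s →
      Gp (i, j) s ≤ -K * fp (i, j) s + (K - ψ₀) * D0 := by
    intro s hs hfs
    have e1 : (∑ m ∈ Finset.univ.erase i, ψ (x i s) (x m s) * (inner ℝ (x m s - x i s) v : ℝ))
        = ∑ m ∈ Finset.univ, ψ (x i s) (x m s) * (inner ℝ (x m s - x i s) v : ℝ) := by
      apply Finset.sum_erase
      simp
    have e2 : (∑ m ∈ Finset.univ.erase j, ψ (x j s) (x m s) * (inner ℝ (x m s - x j s) v : ℝ))
        = ∑ m ∈ Finset.univ, ψ (x j s) (x m s) * (inner ℝ (x m s - x j s) v : ℝ) := by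
      apply Finset.sum_erase
      simp
    have hsum : (∑ m ∈ Finset.univ, (ψ (x i s) (x m s) * (inner ℝ (x m s - x i s) v : ℝ) -
        ψ (x j s) (x m s) * (inner ℝ (x m s - x j s) v : ℝ)))
        ≤ ((N:ℝ) - 1) * (-K * fp (i, j) s + (K - ψ₀) * D0) := by
      rw [← Finset.add_sum_erase Finset.univ _ (Finset.mem_univ i)]
      have hTi : ψ (x i s) (x i s) * (inner ℝ (x i s - x i s) v : ℝ) -
          ψ (x j s) (x i s) * (inner ℝ (x i s - x j s) v : ℝ) ≤ 0 := by
        have h0 : (inner ℝ (x i s - x i s) v : ℝ) = 0 := by simp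
        have h1 : (inner ℝ (x i s - x j s) v : ℝ) = fp (i, j) s := by simp [hfp]
        rw [h0, h1, mul_zero, zero_sub, neg_nonpos]
        exact mul_nonneg (hψpos _ _).le hfs
      have hTm : ∀ m ∈ Finset.univ.erase i,
          ψ (x i s) (x m s) * (inner ℝ (x m s - x i s) v : ℝ) -
            ψ (x j s) (x m s) * (inner ℝ (x m s - x j s) v : ℝ)
          ≤ -K * fp (i, j) s + (K - ψ₀) * D0 := by
        intro m _
        have hbm : (inner ℝ (x m s - x j s) v : ℝ) = (inner ℝ (x m s - x i s) v : ℝ) + fp (i, j) s := by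
          simp only [hfp, inner_sub_left]
          ring
        rw [hbm]
        refine termBound hψ₀ (hψlow i m s hs) (hψK _ _) (hψlow j m s hs) (hψK _ _) hfs
          (hdiam s hs (i, j)) ?_ ?_
        · rw [← hbm]
          exact hdiam s hs (m, j)
        · have hna : -(inner ℝ (x m s - x i s) v : ℝ) = fp (i, m) s := by
            simp only [hfp, inner_sub_left]
            ring
          rw [hna]
          exact hdiam s hs (i, m)
      have h2 := Finset.sum_le_card_nsmul (Finset.univ.erase i) _ _ hTm
      have hcard : (Finset.univ.erase i).card = N - 1 := by
        rw [Finset.card_erase_of_mem (Finset.mem_univ i), Finset.card_univ, Fintype.card_fin]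
      rw [hcard, nsmul_eq_mul] at h2
      have hcast : ((N - 1 : ℕ) : ℝ) = (N:ℝ) - 1 := by
        have : 1 ≤ N := by omega
        push_cast [Nat.cast_sub this]
        ring
      rw [hcast] at h2
      linarith
    have hfin := mul_le_mul_of_nonneg_left hsum (inv_nonneg.2 hNpos.le)
    rw [← mul_assoc, inv_mul_cancel₀ hNpos.ne', one_mul] at hfin
    calc Gp (i, j) s
        = ((N : ℝ) - 1)⁻¹ * ((∑ m ∈ Finset.univ.erase i,
            ψ (x i s) (x m s) * (inner ℝ (x m s - x i s) v : ℝ)) -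
          (∑ m ∈ Finset.univ.erase j, ψ (x j s) (x m s) * (inner ℝ (x m s - x j s) v : ℝ))) := hGpexp _ _
      _ = ((N : ℝ) - 1)⁻¹ * (∑ m ∈ Finset.univ, (ψ (x i s) (x m s) * (inner ℝ (x m s - x i s) v : ℝ) -
            ψ (x j s) (x m s) * (inner ℝ (x m s - x j s) v : ℝ))) := by
          rw [e1, e2, Finset.sum_sub_distrib]
      _ ≤ -K * fp (i, j) s + (K - ψ₀) * D0 := hfin
  have hftb : fp (i, j) tb = D1 := by
    have h1 : fp (i, j) tb = D1⁻¹ * (‖x i tb - x j tb‖ * ‖x i tb - x j tb‖) := by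
      simp only [hfp, hv, real_inner_smul_right, real_inner_self_eq_norm_mul_norm]
    rw [h1, ← hD1def, inv_mul_cancel_left₀ hD1.ne']
  have hfta : fp (i, j) ta ≤ D0 := hdiam ta (Set.left_mem_Icc.2 hab.le) (i, j)
  -- the two cases
  rcases (em (∀ s ∈ Set.Icc ta tb, 0 ≤ fp (i, j) s)) with hcase | hcase
  · -- f stays nonnegative
    have hcmp := expComp (c := (K - ψ₀) * D0) hab hK (fun s hs => hfd (i, j) s hs)
      (fun s hs => hbound s hs (hcase s hs))
    rw [hftb] at hcmp
    have hcK : (K - ψ₀) * D0 / K = (1 - ψ₀ / K) * D0 := by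
      field_simp
    rw [hcK] at hcmp
    have hψK1 : 0 ≤ 1 - ψ₀ / K := by
      rw [sub_nonneg]
      exact div_le_one_of_le₀ hψ₀K hK.le
    have step1 : D1 ≤ e0 * D0 + (1 - ψ₀ / K) * D0 * (1 - e0) := by
      have h1 : e0 * fp (i, j) ta ≤ e0 * D0 := mul_le_mul_of_nonneg_left hfta he0pos.le
      linarith
    have step2 : e0 * D0 + (1 - ψ₀ / K) * D0 * (1 - e0) = (1 - ψ₀ / K * (1 - e0)) * D0 := by
      ring
    rw [step2] at step1
    refine le_trans step1 ?_
    exact mul_le_mul_of_nonneg_right (le_max_right _ _) hD0nonneg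
  · -- f becomes negative somewhere
    push_neg at hcase
    obtain ⟨s1, hs1, hs1neg⟩ := hcase
    have hcont : ContinuousOn (fp (i, j)) (Set.Icc ta tb) :=
      fun s hs => (hfd (i, j) s hs).continuousAt.continuousWithinAt
    set S : Set ℝ := Set.Icc ta tb ∩ fp (i, j) ⁻¹' Set.Iic 0 with hS
    have hSne : S.Nonempty := ⟨s1, hs1, hs1neg.le⟩
    have hSbdd : BddAbove S := ⟨tb, fun z hz => hz.1.2⟩
    have hScl : IsClosed S :=
      hcont.preimage_isClosed_of_isClosed isClosed_Icc isClosed_Iic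
    set s0 := sSup S with hs0
    have hs0S : s0 ∈ S := hScl.csSup_mem hSne hSbdd
    have hs0I : s0 ∈ Set.Icc ta tb := hs0S.1
    have hs0le : fp (i, j) s0 ≤ 0 := hs0S.2
    have hs0tb : s0 < tb := by
      rcases lt_or_eq_of_le hs0I.2 with h | h
      · exact h
      · exfalso
        rw [h, hftb] at hs0le
        linarith
    have hpos : ∀ z ∈ Set.Ioc s0 tb, 0 < fp (i, j) z := by
      intro z hz
      by_contra hcon
      push_neg at hcon
      have hzS : z ∈ S := ⟨⟨le_trans hs0I.1 hz.1.le, hz.2⟩, hcon⟩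
      exact absurd (le_csSup hSbdd hzS) (not_le.2 hz.1)
    have hs00 : fp (i, j) s0 = 0 := by
      refine le_antisymm hs0le ?_
      have hten : Filter.Tendsto (fp (i, j)) (nhdsWithin s0 (Set.Ioi s0)) (nhds (fp (i, j) s0)) :=
        ((hfd (i, j) s0 hs0I).continuousAt.tendsto).mono_left nhdsWithin_le_nhds
      refine ge_of_tendsto hten ?_
      filter_upwards [Ioc_mem_nhdsGT_of_mem ⟨le_rfl, hs0tb⟩] with z hz
      exact (hpos z hz).le
    have hsub : Set.Icc s0 tb ⊆ Set.Icc ta tb := Set.Icc_subset_Icc hs0I.1 le_rfl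
    have hcmp := expComp (a := s0) (b := tb) (c := (K - ψ₀) * D0) hs0tb hK
      (fun s hs => hfd (i, j) s (hsub hs))
      (fun s hs => by
        refine hbound s (hsub hs) ?_
        rcases eq_or_lt_of_le hs.1 with h | h
        · rw [← h, hs00]
        · exact (hpos s ⟨h, hs.2⟩).le)
    rw [hftb, hs00, mul_zero, zero_add] at hcmp
    set e1 := Real.exp (-K * (tb - s0)) with he1
    have he1pos : 0 < e1 := Real.exp_pos _
    have he1le : e0 ≤ e1 := by
      rw [he0, he1]
      apply Real.exp_le_exp.2
      have h := mul_le_mul_of_nonneg_left hs0I.1 hK.le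
      linarith
    have he1lt1 : e1 ≤ 1 := by
      rw [he1, Real.exp_le_one_iff]
      nlinarith [mul_pos hK (sub_pos.2 hs0tb)]
    have hcK : (K - ψ₀) * D0 / K = (1 - ψ₀ / K) * D0 := by
      field_simp
    rw [hcK] at hcmp
    have hψK1 : 0 ≤ 1 - ψ₀ / K := by
      rw [sub_nonneg]
      exact div_le_one_of_le₀ hψ₀K hK.le
    have hb2 : (1 - ψ₀ / K) * D0 * (1 - e1) ≤ 1 * D0 * (1 - e0) := by
      apply mul_le_mul
      · refine mul_le_mul_of_nonneg_right ?_ hD0nonneg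
        linarith [div_pos hψ₀ hK]
      · linarith
      · linarith
      · exact mul_nonneg zero_le_one hD0nonneg
    refine le_trans hcmp (le_trans hb2 ?_)
    calc 1 * D0 * (1 - e0) = (1 - e0) * D0 := by ring
      _ ≤ C * D0 := mul_le_mul_of_nonneg_right (le_max_left _ _) hD0nonneg
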